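/- Let h ~ CN(0, σ²), z ~ CN(0, N0) independent, s = sqrt(βP)·h + z, and define the phase-projection estimator ĥ = |h|·s/|s| (which knows the true modulus and takes the phase of s). Then as βP/N0 → 0, E[|ĥ − h|²] → 2σ², whereas the classical MAP/MMSE estimator ĥ₀ = (sqrt(βP)σ²/(N0 + βPσ²))·s satisfies E[|ĥ₀ − h|²] → σ². Hence in the zero-SNR limit the modulus-informed MAP has twice the MSE of the classical estimator. -/

import Mathlib

open MeasureTheory ProbabilityTheory Filter

/-- The circularly symmetric complex Gaussian `CN(0, v)`: real and imaginary parts are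
independent `N(0, v/2)`. -/
noncomputable def complexGaussian (v : NNReal) : Measure ℂ :=
  ((gaussianReal 0 (v / 2)).prod (gaussianReal 0 (v / 2))).map
    (fun p : ℝ × ℝ => (p.1 : ℂ) + (p.2 : ℂ) * Complex.I)


section helpers2
open Real
open scoped ENNReal NNReal

@[fun_prop] lemma meas_cabs : Measurable (norm : ℂ → ℝ) := continuous_norm.measurable
@[fun_prop] lemma meas_cnormSq : Measurable Complex.normSq := Complex.continuous_normSq.measurable
@[fun_prop] lemma meas_cre : Measurable Complex.re := Complex.measurable_re
@[fun_prop] lemma meas_cim : Measurable Complex.im := Complex.measurable_im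


section helpers
open Real
open scoped ENNReal NNReal

lemma my_integrable_sq_exp {b : ℝ} (hb : 0 < b) :
    Integrable (fun x : ℝ => x ^ 2 * Real.exp (-b * x ^ 2)) := by
  have h := integrable_rpow_mul_exp_neg_mul_sq hb (s := 2) (by norm_num)
  simp_rw [show ((2:ℝ)) = ((2:ℕ):ℝ) by norm_num, Real.rpow_natCast] at h
  exact h

lemma my_tendsto_aux {b : ℝ} (hb : 0 < b) :
    Tendsto (fun T : ℝ => T * Real.exp (-b * T ^ 2)) atTop (nhds 0) := by
  have h := rpow_mul_exp_neg_mul_sq_isLittleO_exp_neg hb 1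
  have h2 : Tendsto (fun x : ℝ => Real.exp (-(1/2) * x)) atTop (nhds 0) := by
    have h4 := Real.tendsto_exp_neg_atTop_nhds_zero.comp
      ((tendsto_id (α := ℝ)).atTop_div_const (by norm_num : (0:ℝ) < 2))
    exact h4.congr (fun x => by simp only [Function.comp_apply, id_eq]; congr 1; ring)
  have h3 := h.trans_tendsto h2
  simp_rw [Real.rpow_one] at h3
  exact h3

lemma my_integral_sq_exp {b : ℝ} (hb : 0 < b) :
    ∫ x : ℝ, x ^ 2 * Real.exp (-b * x ^ 2) = Real.sqrt (π / b) / (2 * b) := by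
  set f : ℝ → ℝ := fun x => x ^ 2 * Real.exp (-b * x ^ 2)
  set g : ℝ → ℝ := fun x => Real.exp (-b * x ^ 2) / (2 * b)
  set F : ℝ → ℝ := fun x => -x * Real.exp (-b * x ^ 2) / (2 * b)
  have hF : ∀ x : ℝ, HasDerivAt F (f x - g x) x := by
    intro x
    have h1 : HasDerivAt (fun x : ℝ => -b * x ^ 2) (-b * (2 * x)) x := by
      simpa using ((hasDerivAt_pow 2 x).const_mul (-b))
    have h2 : HasDerivAt (fun x : ℝ => Real.exp (-b * x ^ 2)) (Real.exp (-b * x^2) * (-b * (2*x))) x :=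
      (h1.exp)
    have h3 : HasDerivAt (fun x : ℝ => -x * Real.exp (-b * x ^ 2))
        (-1 * Real.exp (-b * x ^ 2) + -x * (Real.exp (-b * x^2) * (-b * (2*x)))) x := by
      exact ((hasDerivAt_id' (x := x)).neg.mul h2)
    have h4 := h3.div_const (2 * b)
    refine h4.congr_deriv ?_
    symm
    show x ^ 2 * Real.exp (-b * x ^ 2) - Real.exp (-b * x ^ 2) / (2 * b) = _
    field_simp [f, g]
    ring
  have hfi : Integrable f := my_integrable_sq_exp hb
  have hgi : Integrable g := (integrable_exp_neg_mul_sq hb).div_const _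
  have t1 : Tendsto (fun T : ℝ => ∫ x in (-T)..T, f x) atTop (nhds (∫ x : ℝ, f x)) :=
    intervalIntegral_tendsto_integral hfi tendsto_neg_atTop_atBot tendsto_id
  have t2 : Tendsto (fun T : ℝ => ∫ x in (-T)..T, g x) atTop (nhds (∫ x : ℝ, g x)) :=
    intervalIntegral_tendsto_integral hgi tendsto_neg_atTop_atBot tendsto_id
  have hFg : ∀ T : ℝ, ∫ x in (-T)..T, f x = (F T - F (-T)) + ∫ x in (-T)..T, g x := by
    intro T
    have hfg : ∫ x in (-T)..T, (f x - g x) = F T - F (-T) := by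
      apply intervalIntegral.integral_eq_sub_of_hasDerivAt (fun x _ => hF x)
      exact (hfi.sub hgi).intervalIntegrable
    rw [← hfg, intervalIntegral.integral_sub hfi.intervalIntegrable hgi.intervalIntegrable]
    ring
  have t3 : Tendsto (fun T : ℝ => F T - F (-T)) atTop (nhds 0) := by
    have := my_tendsto_aux hb
    have h1 : Tendsto (fun T : ℝ => F T - F (-T)) atTop (nhds (-(0 / (2*b)) - 0/(2*b))) := by
      apply Tendsto.sub
      · simpa [F, neg_mul] using ((this.neg).div_const (2*b))
      · have : Tendsto (fun T : ℝ => -(-T) * Real.exp (-b * (-T)^2) / (2*b)) atTop (nhds (0/(2*b))) := by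
          simpa [neg_neg] using (my_tendsto_aux hb).div_const (2*b)
        simpa [F] using this
    simpa using h1
  have t4 : Tendsto (fun T : ℝ => (F T - F (-T)) + ∫ x in (-T)..T, g x) atTop
      (nhds (0 + ∫ x : ℝ, g x)) := t3.add t2
  have : (∫ x : ℝ, f x) = 0 + ∫ x : ℝ, g x := by
    apply tendsto_nhds_unique t1
    simpa [← hFg] using t4
  rw [this, zero_add]
  simp only [g, div_eq_mul_inv, integral_mul_const]
  rw [integral_gaussian]
  simp [div_eq_mul_inv]

lemma gr_density (v : ℝ≥0) (hv : v ≠ 0) :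
    gaussianReal 0 v = volume.withDensity
      (fun x => ((gaussianPDFReal 0 v x).toNNReal : ℝ≥0∞)) := by
  rw [gaussianReal_of_var_ne_zero _ hv]
  rfl

lemma pdf_eq (v : ℝ≥0) (hv : 0 < v) (x : ℝ) :
    gaussianPDFReal 0 v x = (Real.sqrt (2 * π * v))⁻¹ * Real.exp (-(2*(v:ℝ))⁻¹ * x ^ 2) := by
  rw [gaussianPDFReal]
  congr 1
  rw [sub_zero]
  congr 1
  field_simp

lemma gr_int_sq (v : ℝ≥0) (hv : v ≠ 0) :
    Integrable (fun x : ℝ => x ^ 2) (gaussianReal 0 v) := by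
  have hv' : (0:ℝ) < v := lt_of_le_of_ne (v.coe_nonneg) (by exact_mod_cast (Ne.symm hv))
  rw [gr_density v hv, integrable_withDensity_iff_integrable_smul
    (measurable_gaussianPDFReal 0 v).real_toNNReal]
  have hb : (0:ℝ) < (2*(v:ℝ))⁻¹ := by positivity
  have : (fun x : ℝ => (gaussianPDFReal 0 v x).toNNReal • x ^ 2)
      = fun x => (Real.sqrt (2 * π * v))⁻¹ * (x ^ 2 * Real.exp (-(2*(v:ℝ))⁻¹ * x ^ 2)) := by
    funext x
    rw [NNReal.smul_def, smul_eq_mul, Real.coe_toNNReal _ (gaussianPDFReal_nonneg 0 v x),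
      pdf_eq v hv']
    ring
  rw [this]
  exact (my_integrable_sq_exp hb).const_mul _

lemma gr_moment (v : ℝ≥0) (hv : v ≠ 0) :
    ∫ x, x ^ 2 ∂(gaussianReal 0 v) = v := by
  have hv' : (0:ℝ) < v := lt_of_le_of_ne (v.coe_nonneg) (by exact_mod_cast (Ne.symm hv))
  rw [gr_density v hv, integral_withDensity_eq_integral_smul
    (measurable_gaussianPDFReal 0 v).real_toNNReal]
  have hb : (0:ℝ) < (2*(v:ℝ))⁻¹ := by positivity
  have : (fun x : ℝ => (gaussianPDFReal 0 v x).toNNReal • x ^ 2)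
      = fun x => (Real.sqrt (2 * π * v))⁻¹ * (x ^ 2 * Real.exp (-(2*(v:ℝ))⁻¹ * x ^ 2)) := by
    funext x
    rw [NNReal.smul_def, smul_eq_mul, Real.coe_toNNReal _ (gaussianPDFReal_nonneg 0 v x),
      pdf_eq v hv']
    ring
  rw [this, integral_const_mul, my_integral_sq_exp hb]
  have h2 : π / (2*(v:ℝ))⁻¹ = 2 * π * v := by field_simp
  rw [h2]
  have h3 : Real.sqrt (2 * π * v) ≠ 0 := by positivity
  field_simp

lemma Tmeas : Measurable (fun p : ℝ × ℝ => (p.1 : ℂ) + (p.2 : ℂ) * Complex.I) := by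
  fun_prop

instance cg_prob (v : ℝ≥0) : IsProbabilityMeasure (complexGaussian v) :=
  MeasureTheory.Measure.isProbabilityMeasure_map Tmeas.aemeasurable

lemma half_ne (v : ℝ≥0) (hv : v ≠ 0) : v / 2 ≠ 0 := by
  simp [div_eq_zero_iff, hv]

lemma cg_int_sq (v : ℝ≥0) (hv : v ≠ 0) :
    Integrable (fun w : ℂ => ‖w‖ ^ 2) (complexGaussian v) := by
  set P := gaussianReal 0 (v / 2)
  rw [complexGaussian, integrable_map_measure (g := fun w : ℂ => ‖w‖ ^ 2)
    (((continuous_norm.pow 2).aestronglyMeasurable)) Tmeas.aemeasurable]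
  have heq : ((fun w : ℂ => ‖w‖ ^ 2) ∘ (fun p : ℝ × ℝ => (p.1 : ℂ) + (p.2 : ℂ) * Complex.I))
      = fun p : ℝ × ℝ => p.1 ^ 2 + p.2 ^ 2 := by
    funext p
    simp [Function.comp, Complex.sq_norm, Complex.normSq_add_mul_I]
  rw [heq]
  have h1 : Integrable (fun p : ℝ × ℝ => p.1 ^ 2) (P.prod P) := by
    have h0 : Integrable (fun x : ℝ => x ^ 2) ((P.prod P).map Prod.fst) := by
      rw [show (P.prod P).map Prod.fst = P from Measure.fst_prod]
      exact gr_int_sq _ (half_ne v hv)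
    exact (integrable_map_measure (by fun_prop) measurable_fst.aemeasurable).mp h0
  have h2 : Integrable (fun p : ℝ × ℝ => p.2 ^ 2) (P.prod P) := by
    have h0 : Integrable (fun x : ℝ => x ^ 2) ((P.prod P).map Prod.snd) := by
      rw [show (P.prod P).map Prod.snd = P from Measure.snd_prod]
      exact gr_int_sq _ (half_ne v hv)
    exact (integrable_map_measure (by fun_prop) measurable_snd.aemeasurable).mp h0
  exact h1.add h2

lemma cg_moment (v : ℝ≥0) (hv : v ≠ 0) :
    ∫ w, ‖w‖ ^ 2 ∂(complexGaussian v) = v := by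
  set P := gaussianReal 0 (v / 2)
  rw [complexGaussian, integral_map (f := fun w : ℂ => ‖w‖ ^ 2) Tmeas.aemeasurable
    (((continuous_norm.pow 2).aestronglyMeasurable))]
  have heq : ∀ p : ℝ × ℝ, ‖(p.1 : ℂ) + (p.2 : ℂ) * Complex.I‖ ^ 2
      = p.1 ^ 2 + p.2 ^ 2 := by
    intro p; simp [Complex.sq_norm, Complex.normSq_add_mul_I]
  simp_rw [heq]
  have h1 : Integrable (fun p : ℝ × ℝ => p.1 ^ 2) (P.prod P) := by
    have h0 : Integrable (fun x : ℝ => x ^ 2) ((P.prod P).map Prod.fst) := by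
      rw [show (P.prod P).map Prod.fst = P from Measure.fst_prod]
      exact gr_int_sq _ (half_ne v hv)
    exact (integrable_map_measure (by fun_prop) measurable_fst.aemeasurable).mp h0
  have h2 : Integrable (fun p : ℝ × ℝ => p.2 ^ 2) (P.prod P) := by
    have h0 : Integrable (fun x : ℝ => x ^ 2) ((P.prod P).map Prod.snd) := by
      rw [show (P.prod P).map Prod.snd = P from Measure.snd_prod]
      exact gr_int_sq _ (half_ne v hv)
    exact (integrable_map_measure (by fun_prop) measurable_snd.aemeasurable).mp h0
  rw [integral_add h1 h2]
  have e1 : ∫ p : ℝ × ℝ, p.1 ^ 2 ∂(P.prod P) = (v : ℝ) / 2 := by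
    have hmi := integral_map (μ := P.prod P) (φ := Prod.fst) (f := fun x : ℝ => x ^ 2)
      measurable_fst.aemeasurable ((measurable_id.pow_const 2).aestronglyMeasurable)
    rw [show (P.prod P).map Prod.fst = P from Measure.fst_prod, gr_moment _ (half_ne v hv)] at hmi
    rw [← hmi]
    push_cast
    ring
  have e2 : ∫ p : ℝ × ℝ, p.2 ^ 2 ∂(P.prod P) = (v : ℝ) / 2 := by
    have hmi := integral_map (μ := P.prod P) (φ := Prod.snd) (f := fun x : ℝ => x ^ 2)
      measurable_snd.aemeasurable ((measurable_id.pow_const 2).aestronglyMeasurable)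
    rw [show (P.prod P).map Prod.snd = P from Measure.snd_prod, gr_moment _ (half_ne v hv)] at hmi
    rw [← hmi]
    push_cast
    ring
  rw [e1, e2]
  ring

lemma cg_map_neg (v : ℝ≥0) :
    (complexGaussian v).map (fun w => -w) = complexGaussian v := by
  set P := gaussianReal 0 (v / 2)
  have hmapP : P.map (fun x : ℝ => -x) = P := by
    have h := gaussianReal_map_const_mul (μ := 0) (v := v / 2) (-1)
    have h2 : (fun x : ℝ => -1 * x) = fun x : ℝ => -x := by funext x; ring
    rw [h2] at h
    rw [show (fun x : ℝ => -x) = (-1 * ·) from by funext x; ring] at h ⊢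
    rw [h]
    congr 1
    · ring
    · ext
      push_cast
      norm_num
  rw [complexGaussian, Measure.map_map (by fun_prop) Tmeas]
  have hcomm : ((fun w : ℂ => -w) ∘ (fun p : ℝ × ℝ => (p.1 : ℂ) + (p.2 : ℂ) * Complex.I))
      = (fun p : ℝ × ℝ => (p.1 : ℂ) + (p.2 : ℂ) * Complex.I) ∘ (Prod.map (fun x : ℝ => -x) (fun x : ℝ => -x)) := by
    funext p
    simp [Function.comp, Prod.map]
    ring
  rw [hcomm, ← Measure.map_map Tmeas (by fun_prop)]
  rw [← Measure.map_prod_map _ _ (by fun_prop) (by fun_prop), hmapP]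

lemma cg_zero (v : ℝ≥0) (hv : v ≠ 0) : complexGaussian v {0} = 0 := by
  set P := gaussianReal 0 (v / 2)
  rw [complexGaussian, Measure.map_apply Tmeas (measurableSet_singleton 0)]
  have hsub : (fun p : ℝ × ℝ => (p.1 : ℂ) + (p.2 : ℂ) * Complex.I) ⁻¹' {0}
      ⊆ {(0 : ℝ)} ×ˢ (Set.univ : Set ℝ) := by
    intro p hp
    simp only [Set.mem_preimage, Set.mem_singleton_iff] at hp
    have : p.1 = 0 := by
      have := congrArg Complex.re hp
      simpa using this
    exact Set.mem_prod.mpr ⟨this, trivial⟩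
  refine measure_mono_null hsub ?_
  rw [Measure.prod_prod]
  have : P {0} = 0 := by
    refine gaussianReal_absolutelyContinuous 0 (half_ne v hv) ?_
    simp
  rw [this, zero_mul]

lemma cg_odd_zero (v : ℝ≥0) {f : ℂ → ℝ} (hodd : ∀ w, f (-w) = - f w)
    (hint : Integrable f (complexGaussian v)) :
    ∫ w, f w ∂(complexGaussian v) = 0 := by
  have h1 : ∫ w, f w ∂(complexGaussian v)
      = ∫ w, f w ∂((complexGaussian v).map (fun w => -w)) := by rw [cg_map_neg]
  rw [integral_map (by fun_prop) (by rw [cg_map_neg]; exact hint.1)] at h1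
  simp_rw [hodd] at h1
  rw [integral_neg] at h1
  linarith

end helpers

/-- the unit-modulus projection has absolute value at most 1 -/
lemma abs_unit_le (w : ℂ) : ‖w / (‖w‖ : ℂ)‖ ≤ 1 := by
  rcases eq_or_ne w 0 with rfl | hw
  · simp
  · rw [norm_div, Complex.norm_real, Real.norm_eq_abs, abs_of_nonneg (norm_nonneg w),
      div_self (norm_ne_zero_iff.mpr hw)]

lemma key_alg (c u : ℂ) (hu : u ≠ 0) :
    ‖(‖c‖ : ℂ) * (u / (‖u‖ : ℂ)) - c‖ ^ 2
      = 2 * ‖c‖ ^ 2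
        - 2 * ((u / (‖u‖ : ℂ)).re * (‖c‖ * c.re))
        - 2 * ((u / (‖u‖ : ℂ)).im * (‖c‖ * c.im)) := by
  set q := u / (‖u‖ : ℂ) with hq
  have habsq : ‖q‖ = 1 := by
    rw [hq, norm_div, Complex.norm_real, Real.norm_eq_abs, abs_of_nonneg (norm_nonneg u),
      div_self (norm_ne_zero_iff.mpr hu)]
  have hab : q.re * q.re + q.im * q.im = 1 := by
    have h1 := Complex.sq_norm q
    rw [habsq, Complex.normSq_apply] at h1
    linarith [h1]
  have hc : c.re * c.re + c.im * c.im = ‖c‖ ^ 2 := by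
    rw [Complex.sq_norm, Complex.normSq_apply]
  rw [Complex.sq_norm, Complex.normSq_apply]
  simp only [Complex.sub_re, Complex.sub_im, Complex.re_ofReal_mul, Complex.im_ofReal_mul]
  nlinarith [hab, hc]


end helpers2

/-- For `h ~ CN(0, σ²)`, `z ~ CN(0, N0)` independent, `s = √(βP)·h + z`, the
modulus-informed phase-projection estimator `ĥ = |h|·s/|s|` has MSE tending to `2σ²` as
`SNR = βP/N0 → 0` (here `N0` fixed, `βP → 0⁺`), whereas the classical MAP/MMSE estimator
`ĥ₀ = (√(βP)σ²/(N0 + βPσ²))·s` has MSE tending to `σ²`: in the zero-SNR limit the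
modulus-informed MAP has twice the MSE of the classical estimator. -/
theorem stmt10 {Ω : Type*} [MeasurableSpace Ω] (μ : Measure Ω) [IsProbabilityMeasure μ]
    (σ2 N0 : NNReal) (hσ2 : 0 < σ2) (hN0 : 0 < N0)
    (h z : Ω → ℂ) (hmeas : Measurable h) (zmeas : Measurable z)
    (hlaw : Measure.map h μ = complexGaussian σ2)
    (zlaw : Measure.map z μ = complexGaussian N0)
    (hindep : IndepFun h z μ) :
    Tendsto (fun βP : ℝ =>
        ∫ ω, ‖(‖h ω‖ : ℂ)
            * (((Real.sqrt βP : ℂ) * h ω + z ω) / (‖(Real.sqrt βP : ℂ) * h ω + z ω‖ : ℂ))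
          - h ω‖ ^ 2 ∂μ)
      (nhdsWithin 0 (Set.Ioi 0)) (nhds (2 * (σ2 : ℝ))) ∧
    Tendsto (fun βP : ℝ =>
        ∫ ω, ‖((Real.sqrt βP * σ2 / ((N0 : ℝ) + βP * σ2) : ℝ) : ℂ)
            * ((Real.sqrt βP : ℂ) * h ω + z ω)
          - h ω‖ ^ 2 ∂μ)
      (nhdsWithin 0 (Set.Ioi 0)) (nhds (σ2 : ℝ)) := by
  have hσ2' : σ2 ≠ 0 := hσ2.ne'
  have hN0' : N0 ≠ 0 := hN0.ne'
  have hN0R : (0:ℝ) < N0 := hN0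
  -- basic integrability facts
  have habsm : AEStronglyMeasurable (fun w : ℂ => ‖w‖ ^ 2) (Measure.map h μ) :=
    (continuous_norm.pow 2).aestronglyMeasurable
  have habsmz : AEStronglyMeasurable (fun w : ℂ => ‖w‖ ^ 2) (Measure.map z μ) :=
    (continuous_norm.pow 2).aestronglyMeasurable
  have hh2_int : Integrable (fun ω => ‖h ω‖ ^ 2) μ := by
    have h0 := cg_int_sq σ2 hσ2'
    rw [← hlaw] at h0
    exact (integrable_map_measure habsm hmeas.aemeasurable).mp h0
  have hz2_int : Integrable (fun ω => ‖z ω‖ ^ 2) μ := by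
    have h0 := cg_int_sq N0 hN0'
    rw [← zlaw] at h0
    exact (integrable_map_measure habsmz zmeas.aemeasurable).mp h0
  have hEh2 : ∫ ω, ‖h ω‖ ^ 2 ∂μ = (σ2 : ℝ) := by
    have h0 := cg_moment σ2 hσ2'
    rw [← hlaw, integral_map hmeas.aemeasurable habsm] at h0
    exact h0
  have hzne : ∀ᵐ ω ∂μ, z ω ≠ 0 := by
    have h0 : μ (z ⁻¹' {0}) = 0 := by
      rw [← Measure.map_apply zmeas (measurableSet_singleton 0), zlaw]
      exact cg_zero N0 hN0'
    rw [ae_iff]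
    convert h0 using 2
    ext ω
    simp
  constructor
  · -- part 1
    set f₀ : Ω → ℝ := fun ω =>
      ‖(‖h ω‖ : ℂ) * (z ω / (‖z ω‖ : ℂ)) - h ω‖ ^ 2 with hf₀
    -- Step A : dominated convergence
    have hA : Tendsto (fun βP : ℝ =>
        ∫ ω, ‖(‖h ω‖ : ℂ)
            * (((Real.sqrt βP : ℂ) * h ω + z ω) / (‖(Real.sqrt βP : ℂ) * h ω + z ω‖ : ℂ))
          - h ω‖ ^ 2 ∂μ)
        (nhdsWithin 0 (Set.Ioi 0)) (nhds (∫ ω, f₀ ω ∂μ)) := by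
      apply tendsto_integral_filter_of_dominated_convergence
        (bound := fun ω => 4 * ‖h ω‖ ^ 2)
      · filter_upwards with b
        apply Measurable.aestronglyMeasurable
        fun_prop
      · filter_upwards with b
        filter_upwards with ω
        rw [Real.norm_eq_abs, abs_of_nonneg (by positivity)]
        set s := (Real.sqrt b : ℂ) * h ω + z ω
        have h1 : ‖(‖h ω‖ : ℂ) * (s / (‖s‖ : ℂ)) - h ω‖
            ≤ 2 * ‖h ω‖ := by
          calc ‖(‖h ω‖ : ℂ) * (s / (‖s‖ : ℂ)) - h ω‖
              ≤ ‖(‖h ω‖ : ℂ) * (s / (‖s‖ : ℂ))‖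
                + ‖h ω‖ := norm_sub_le _ _
            _ ≤ ‖h ω‖ * 1 + ‖h ω‖ := by
                rw [norm_mul, Complex.norm_real, Real.norm_eq_abs, abs_of_nonneg (norm_nonneg _)]
                gcongr
                exact abs_unit_le s
            _ = 2 * ‖h ω‖ := by ring
        calc ‖(‖h ω‖ : ℂ) * (s / (‖s‖ : ℂ)) - h ω‖ ^ 2
            ≤ (2 * ‖h ω‖) ^ 2 := by
              apply pow_le_pow_left₀ (norm_nonneg _) h1
          _ = 4 * ‖h ω‖ ^ 2 := by ring
      · exact hh2_int.const_mul 4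
      · filter_upwards [hzne] with ω hzω
        have hsz : Tendsto (fun b : ℝ => (Real.sqrt b : ℂ) * h ω + z ω)
            (nhdsWithin 0 (Set.Ioi 0)) (nhds (z ω)) := by
          have h1 : Tendsto (fun b : ℝ => (Real.sqrt b : ℂ)) (nhds 0) (nhds 0) := by
            have h2 : Tendsto Real.sqrt (nhds 0) (nhds 0) := by
              simpa using (Real.continuous_sqrt.tendsto 0)
            have := (Complex.continuous_ofReal.tendsto 0).comp h2
            simpa [Function.comp_def] using this
          have := (h1.mul_const (h ω)).add_const (z ω)
          simpa using this.mono_left nhdsWithin_le_nhds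
        have habs : Tendsto (fun b : ℝ => (‖(Real.sqrt b : ℂ) * h ω + z ω‖ : ℂ))
            (nhdsWithin 0 (Set.Ioi 0)) (nhds ((‖z ω‖ : ℂ))) :=
          (Complex.continuous_ofReal.tendsto _).comp
            ((continuous_norm.tendsto _).comp hsz)
        have hne : (‖z ω‖ : ℂ) ≠ 0 := by
          simpa [Complex.ofReal_eq_zero] using norm_ne_zero_iff.mpr hzω
        have hdiv := hsz.div habs hne
        have := ((hdiv.const_mul ((‖h ω‖ : ℂ))).sub_const (h ω))
        exact ((continuous_pow 2).tendsto _).comp ((continuous_norm.tendsto _).comp this)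
    -- Step B : identify the limit integral
    have hB : ∫ ω, f₀ ω ∂μ = 2 * (σ2 : ℝ) := by
      set φ1 : ℂ → ℝ := fun w => (w / (‖w‖ : ℂ)).re with hφ1
      set φ2 : ℂ → ℝ := fun w => (w / (‖w‖ : ℂ)).im with hφ2
      set ψ1 : ℂ → ℝ := fun w => ‖w‖ * w.re with hψ1
      set ψ2 : ℂ → ℝ := fun w => ‖w‖ * w.im with hψ2
      have hφ1m : Measurable φ1 := by fun_prop
      have hφ2m : Measurable φ2 := by fun_prop
      have hψ1m : Measurable ψ1 := by fun_prop
      have hψ2m : Measurable ψ2 := by fun_prop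
      set W1 : Ω → ℝ := fun ω => φ1 (z ω) with hW1
      set W2 : Ω → ℝ := fun ω => φ2 (z ω) with hW2
      set G1 : Ω → ℝ := fun ω => ψ1 (h ω) with hG1
      set G2 : Ω → ℝ := fun ω => ψ2 (h ω) with hG2
      have hW1m : Measurable W1 := hφ1m.comp zmeas
      have hW2m : Measurable W2 := hφ2m.comp zmeas
      have hG1m : Measurable G1 := hψ1m.comp hmeas
      have hG2m : Measurable G2 := hψ2m.comp hmeas
      have hG1int : Integrable G1 μ := by
        refine hh2_int.mono' hG1m.aestronglyMeasurable (ae_of_all _ fun ω => ?_)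
        rw [Real.norm_eq_abs, abs_mul, abs_of_nonneg (norm_nonneg _)]
        calc ‖h ω‖ * |(h ω).re| ≤ ‖h ω‖ * ‖h ω‖ := by
              gcongr
              exact Complex.abs_re_le_norm _
          _ = ‖h ω‖ ^ 2 := by ring
      have hG2int : Integrable G2 μ := by
        refine hh2_int.mono' hG2m.aestronglyMeasurable (ae_of_all _ fun ω => ?_)
        rw [Real.norm_eq_abs, abs_mul, abs_of_nonneg (norm_nonneg _)]
        calc ‖h ω‖ * |(h ω).im| ≤ ‖h ω‖ * ‖h ω‖ := by
              gcongr
              exact Complex.abs_im_le_norm _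
          _ = ‖h ω‖ ^ 2 := by ring
      have hW1bdd : ∀ ω, ‖W1 ω‖ ≤ 1 := fun ω => by
        rw [Real.norm_eq_abs]
        exact le_trans (Complex.abs_re_le_norm _) (abs_unit_le _)
      have hW2bdd : ∀ ω, ‖W2 ω‖ ≤ 1 := fun ω => by
        rw [Real.norm_eq_abs]
        exact le_trans (Complex.abs_im_le_norm _) (abs_unit_le _)
      have hWG1 : Integrable (fun ω => W1 ω * G1 ω) μ :=
        hG1int.bdd_mul hW1m.aestronglyMeasurable (ae_of_all _ hW1bdd)
      have hWG2 : Integrable (fun ω => W2 ω * G2 ω) μ :=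
        hG2int.bdd_mul hW2m.aestronglyMeasurable (ae_of_all _ hW2bdd)
      have hodd1 : ∀ w : ℂ, φ1 (-w) = - φ1 w := fun w => by
        simp [hφ1, map_neg, neg_div, Complex.neg_re]
      have hodd2 : ∀ w : ℂ, φ2 (-w) = - φ2 w := fun w => by
        simp [hφ2, map_neg, neg_div, Complex.neg_im]
      have hφ1int : Integrable φ1 (complexGaussian N0) := by
        refine (integrable_const (1:ℝ)).mono' hφ1m.aestronglyMeasurable (ae_of_all _ fun w => ?_)
        rw [Real.norm_eq_abs]
        exact le_trans (Complex.abs_re_le_norm _) (abs_unit_le _)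
      have hφ2int : Integrable φ2 (complexGaussian N0) := by
        refine (integrable_const (1:ℝ)).mono' hφ2m.aestronglyMeasurable (ae_of_all _ fun w => ?_)
        rw [Real.norm_eq_abs]
        exact le_trans (Complex.abs_im_le_norm _) (abs_unit_le _)
      have EW1 : ∫ ω, W1 ω ∂μ = 0 := by
        have e := integral_map (μ := μ) zmeas.aemeasurable hφ1m.aestronglyMeasurable (f := φ1)
        rw [zlaw] at e
        rw [show (fun ω => W1 ω) = fun ω => φ1 (z ω) from rfl, ← e]
        exact cg_odd_zero N0 hodd1 hφ1int
      have EW2 : ∫ ω, W2 ω ∂μ = 0 := by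
        have e := integral_map (μ := μ) zmeas.aemeasurable hφ2m.aestronglyMeasurable (f := φ2)
        rw [zlaw] at e
        rw [show (fun ω => W2 ω) = fun ω => φ2 (z ω) from rfl, ← e]
        exact cg_odd_zero N0 hodd2 hφ2int
      have hindep1 : IndepFun W1 G1 μ := hindep.symm.comp hφ1m hψ1m
      have hindep2 : IndepFun W2 G2 μ := hindep.symm.comp hφ2m hψ2m
      have EWG1 : ∫ ω, W1 ω * G1 ω ∂μ = 0 := by
        have e := hindep1.integral_mul_eq_mul_integral hW1m.aestronglyMeasurable hG1m.aestronglyMeasurable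
        rw [show (W1 * G1 : Ω → ℝ) = fun ω => W1 ω * G1 ω from rfl] at e
        rw [e, EW1, zero_mul]
      have EWG2 : ∫ ω, W2 ω * G2 ω ∂μ = 0 := by
        have e := hindep2.integral_mul_eq_mul_integral hW2m.aestronglyMeasurable hG2m.aestronglyMeasurable
        rw [show (W2 * G2 : Ω → ℝ) = fun ω => W2 ω * G2 ω from rfl] at e
        rw [e, EW2, zero_mul]
      have hcongr : f₀ =ᵐ[μ] fun ω =>
          2 * ‖h ω‖ ^ 2 - 2 * (W1 ω * G1 ω) - 2 * (W2 ω * G2 ω) := by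
        filter_upwards [hzne] with ω hzω
        exact key_alg (h ω) (z ω) hzω
      rw [integral_congr_ae hcongr]
      have i0 : Integrable (fun a => 2 * ‖h a‖ ^ 2) μ := hh2_int.const_mul 2
      have iW1 : Integrable (fun a => 2 * (W1 a * G1 a)) μ := hWG1.const_mul 2
      have iW2 : Integrable (fun a => 2 * (W2 a * G2 a)) μ := hWG2.const_mul 2
      have i1 : Integrable (fun a => 2 * ‖h a‖ ^ 2 - 2 * (W1 a * G1 a)) μ :=
        i0.sub iW1
      rw [integral_sub i1 iW2, integral_sub i0 iW1,
        integral_const_mul 2, integral_const_mul 2, integral_const_mul 2, hEh2, EWG1, EWG2]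
      ring
    rw [hB] at hA
    exact hA
  · -- part 2
    have hA : Tendsto (fun βP : ℝ =>
        ∫ ω, ‖((Real.sqrt βP * σ2 / ((N0 : ℝ) + βP * σ2) : ℝ) : ℂ)
            * ((Real.sqrt βP : ℂ) * h ω + z ω)
          - h ω‖ ^ 2 ∂μ)
        (nhdsWithin 0 (Set.Ioi 0)) (nhds (∫ ω, ‖h ω‖ ^ 2 ∂μ)) := by
      set K : ℝ := (σ2 : ℝ) / N0 with hK
      have hK0 : 0 ≤ K := by positivity
      apply tendsto_integral_filter_of_dominated_convergence
        (bound := fun ω => (K + 1) ^ 2 * (2 * ‖h ω‖ ^ 2 + 2 * ‖z ω‖ ^ 2))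
      · filter_upwards with b
        apply Measurable.aestronglyMeasurable
        fun_prop
      · filter_upwards [Ioo_mem_nhdsGT_of_mem (Set.mem_Ico.mpr ⟨le_refl (0:ℝ), zero_lt_one⟩)]
          with b hb
        filter_upwards with ω
        obtain ⟨hb0, hb1⟩ := hb
        set c : ℝ := Real.sqrt b * σ2 / ((N0 : ℝ) + b * σ2) with hc
        have hsb1 : Real.sqrt b ≤ 1 := Real.sqrt_le_one.mpr hb1.le
        have hc0 : 0 ≤ c := by positivity
        have hcK : c ≤ K := by
          rw [hc, hK]
          apply div_le_div₀ (σ2.coe_nonneg) _ hN0R _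
          · nlinarith [σ2.coe_nonneg]
          · nlinarith [σ2.coe_nonneg, NNReal.coe_nonneg σ2]
        rw [Real.norm_eq_abs, abs_of_nonneg (by positivity)]
        set s := (Real.sqrt b : ℂ) * h ω + z ω with hs
        have hsabs : ‖s‖ ≤ ‖h ω‖ + ‖z ω‖ := by
          calc ‖s‖ ≤ ‖(Real.sqrt b : ℂ) * h ω‖ + ‖z ω‖ :=
              norm_add_le _ _
            _ ≤ ‖h ω‖ + ‖z ω‖ := by
              rw [norm_mul, Complex.norm_real, Real.norm_eq_abs, abs_of_nonneg (Real.sqrt_nonneg b)]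
              nlinarith [norm_nonneg (h ω)]
        have h1 : ‖(c : ℂ) * s - h ω‖
            ≤ (K + 1) * (‖h ω‖ + ‖z ω‖) := by
          calc ‖(c : ℂ) * s - h ω‖
              ≤ ‖(c : ℂ) * s‖ + ‖h ω‖ := norm_sub_le _ _
            _ = c * ‖s‖ + ‖h ω‖ := by
                rw [norm_mul, Complex.norm_real, Real.norm_eq_abs, abs_of_nonneg hc0]
            _ ≤ (K + 1) * (‖h ω‖ + ‖z ω‖) := by
                nlinarith [norm_nonneg (h ω), norm_nonneg (z ω),
                  norm_nonneg s]
        calc ‖(c : ℂ) * s - h ω‖ ^ 2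
            ≤ ((K + 1) * (‖h ω‖ + ‖z ω‖)) ^ 2 :=
              pow_le_pow_left₀ (norm_nonneg _) h1 2
          _ ≤ (K + 1) ^ 2 * (2 * ‖h ω‖ ^ 2 + 2 * ‖z ω‖ ^ 2) := by
              nlinarith [norm_nonneg (h ω), norm_nonneg (z ω), sq_nonneg (K+1),
                sq_nonneg (‖h ω‖ - ‖z ω‖)]
      · exact ((hh2_int.const_mul 2).add (hz2_int.const_mul 2)).const_mul _
      · filter_upwards with ω
        have hc0 : Tendsto (fun b : ℝ => Real.sqrt b * (σ2:ℝ) / ((N0 : ℝ) + b * σ2))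
            (nhdsWithin 0 (Set.Ioi 0)) (nhds 0) := by
          have hnum : Tendsto (fun b : ℝ => Real.sqrt b * (σ2:ℝ)) (nhds 0) (nhds 0) := by
            have h2 : Tendsto Real.sqrt (nhds 0) (nhds 0) := by
              simpa using (Real.continuous_sqrt.tendsto 0)
            simpa using h2.mul_const (σ2:ℝ)
          have hden : Tendsto (fun b : ℝ => (N0 : ℝ) + b * σ2) (nhds 0) (nhds (N0 : ℝ)) := by
            have hcont : Continuous (fun b : ℝ => (N0 : ℝ) + b * σ2) := by continuity
            have := hcont.tendsto 0
            simpa using this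
          have := hnum.div hden hN0R.ne'
          simpa only [zero_div, Pi.div_def] using this.mono_left nhdsWithin_le_nhds
        have hcC : Tendsto (fun b : ℝ => ((Real.sqrt b * σ2 / ((N0 : ℝ) + b * σ2) : ℝ) : ℂ))
            (nhdsWithin 0 (Set.Ioi 0)) (nhds 0) := by
          have h4 := (Complex.continuous_ofReal.tendsto 0).comp hc0
          rw [Complex.ofReal_zero] at h4
          exact h4
        have hsz : Tendsto (fun b : ℝ => (Real.sqrt b : ℂ) * h ω + z ω)
            (nhdsWithin 0 (Set.Ioi 0)) (nhds (z ω)) := by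
          have h1 : Tendsto (fun b : ℝ => (Real.sqrt b : ℂ)) (nhds 0) (nhds 0) := by
            have h2 : Tendsto Real.sqrt (nhds 0) (nhds 0) := by
              simpa using (Real.continuous_sqrt.tendsto 0)
            have := (Complex.continuous_ofReal.tendsto 0).comp h2
            simpa [Function.comp_def] using this
          have := (h1.mul_const (h ω)).add_const (z ω)
          simpa using this.mono_left nhdsWithin_le_nhds
        have := (hcC.mul hsz).sub_const (h ω)
        have h3 := ((continuous_pow 2).tendsto _).comp ((continuous_norm.tendsto _).comp this)
        simpa [Function.comp_def] using h3
    rw [hEh2] at hA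
    exact hA
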